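/- Let X be a geodesic δ-hyperbolic metric space with basepoint x₀ and let A and B be hyperbolic isometries of X such that AB is also hyperbolic. Assume A⁺ = B⁻, encoded by: the Gromov products (Aⁿx₀ | B⁻ᵐx₀)_{x₀} tend to +∞ as min(n,m) → +∞. Assume there exist geodesic lines L_A from A⁻ to A⁺, L_B from B⁻ to B⁺, and L_{AB} from (AB)⁻ to (AB)⁺. If in addition l_S(A) > l_S(B) + 88δ, then (AB)⁺ = A⁺; that is, the Gromov products ((AB)ⁿx₀ | Aᵐx₀)_{x₀} tend to +∞ as min(n,m) → +∞. -/

import Mathlib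

open Metric Filter Set Topology

/-- The Gromov product `(x|y)_z = ½(d(z,x)+d(z,y)−d(x,y))`. -/
noncomputable def gromovProd {X : Type*} [MetricSpace X] (x y z : X) : ℝ :=
  (dist z x + dist z y - dist x y) / 2

/-- A parametrized geodesic segment from `x` to `y` (defined on `[0, dist x y]`). -/
def IsGeodesicSegment {X : Type*} [MetricSpace X] (x y : X) (f : ℝ → X) : Prop :=
  f 0 = x ∧ f (dist x y) = y ∧
    ∀ s ∈ Set.Icc (0 : ℝ) (dist x y), ∀ t ∈ Set.Icc (0 : ℝ) (dist x y),
      dist (f s) (f t) = |s - t|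

/-- The metric space `X` is geodesic: any two points are joined by a geodesic segment. -/
def GeodesicMetricSpace (X : Type*) [MetricSpace X] : Prop :=
  ∀ x y : X, ∃ f : ℝ → X, IsGeodesicSegment x y f

/-- `X` is δ-hyperbolic in the sense of Rips: every geodesic triangle is δ-thin,
i.e. each side is contained in the δ-neighbourhood of the union of the other two. -/
def RipsHyperbolic (X : Type*) [MetricSpace X] (δ : ℝ) : Prop :=
  ∀ (x y z : X) (f g h : ℝ → X),
    IsGeodesicSegment x y f → IsGeodesicSegment y z g → IsGeodesicSegment z x h →
      ∀ s ∈ Set.Icc (0 : ℝ) (dist x y),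
        infDist (f s) (g '' Set.Icc 0 (dist y z) ∪ h '' Set.Icc 0 (dist z x)) ≤ δ

/-- A (parametrized) geodesic line in `X`. -/
def IsGeodesicLine {X : Type*} [MetricSpace X] (L : ℝ → X) : Prop :=
  ∀ s t : ℝ, dist (L s) (L t) = |s - t|

/-- A (parametrized) geodesic ray in `X` (parametrized on `[0,∞)`). -/
def IsGeodesicRay {X : Type*} [MetricSpace X] (r : ℝ → X) : Prop :=
  ∀ s t : ℝ, 0 ≤ s → 0 ≤ t → dist (r s) (r t) = |s - t|

/-- `L` is a geodesic from `A⁻` to `A⁺` (oriented toward `A⁺`): it is a geodesic line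
such that, with `x₀ = L 0`, the Gromov products `(Aⁿx₀ | L t)_{x₀}` tend to `+∞` as
`min(n,t) → +∞`, and `(A⁻ⁿx₀ | L (−t))_{x₀}` tend to `+∞` as `min(n,t) → +∞`. -/
def IsGeodesicFromTo {X : Type*} [MetricSpace X] (A : X ≃ᵢ X) (L : ℝ → X) : Prop :=
  IsGeodesicLine L ∧
    (∀ M : ℝ, ∃ N : ℝ, ∀ (n : ℕ) (t : ℝ), N ≤ (n : ℝ) → N ≤ t →
      M ≤ gromovProd ((A ^ n) (L 0)) (L t) (L 0)) ∧
    (∀ M : ℝ, ∃ N : ℝ, ∀ (n : ℕ) (t : ℝ), N ≤ (n : ℝ) → N ≤ t →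
      M ≤ gromovProd ((A⁻¹ ^ n) (L 0)) (L (-t)) (L 0))

/-- An element of `F₂` is primitive if it is the image of a generator under an
automorphism of `F₂` (equivalently, it belongs to some free basis). -/
def Primitive (γ : FreeGroup (Fin 2)) : Prop :=
  ∃ φ : FreeGroup (Fin 2) ≃* FreeGroup (Fin 2), φ (FreeGroup.of 0) = γ

/-- The (reduced) word length of an element of `F₂`. -/
noncomputable def wordLength (γ : FreeGroup (Fin 2)) : ℕ := γ.toWord.length

/-- The cyclically reduced word length `‖γ‖`: the minimum of the word lengths
of the conjugates of `γ`. -/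
noncomputable def cycLength (γ : FreeGroup (Fin 2)) : ℕ :=
  sInf (Set.range fun g : FreeGroup (Fin 2) => wordLength (g * γ * g⁻¹))

/-- `γ` is cyclically reduced if its word length equals its cyclically reduced length. -/
def CyclicallyReduced (γ : FreeGroup (Fin 2)) : Prop :=
  wordLength γ = cycLength γ


section GP
variable {X : Type*} [MetricSpace X]

lemma gp_nonneg (x y z : X) : 0 ≤ gromovProd x y z := by
  have := dist_triangle x z y
  unfold gromovProd
  rw [dist_comm z x] at *
  linarith

lemma gp_comm (x y z : X) : gromovProd x y z = gromovProd y x z := by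
  unfold gromovProd; rw [dist_comm x y]; ring

lemma gp_le_right (x y z : X) : gromovProd x y z ≤ dist z y := by
  have := dist_triangle z y x
  unfold gromovProd
  rw [dist_comm y x] at this
  linarith

lemma gp_le_left (x y z : X) : gromovProd x y z ≤ dist z x := by
  rw [gp_comm]; exact gp_le_right y x z

lemma gp_base_change (x y p q : X) : gromovProd x y q - dist p q ≤ gromovProd x y p := by
  have h1 := dist_triangle q p x
  have h2 := dist_triangle q p y
  unfold gromovProd
  rw [dist_comm p q] at *
  linarith

lemma gp_isom (Φ : X ≃ᵢ X) (x y z : X) : gromovProd (Φ x) (Φ y) (Φ z) = gromovProd x y z := by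
  unfold gromovProd
  rw [Φ.dist_eq, Φ.dist_eq, Φ.dist_eq]

lemma gp_sum (x y z : X) : gromovProd x y z + gromovProd x z y = dist y z := by
  unfold gromovProd
  rw [dist_comm z x, dist_comm z y, dist_comm y x]
  ring

end GP

section Hyp
variable {X : Type*} [MetricSpace X]

lemma lemmaA {δ : ℝ} (hδ : 0 ≤ δ) (hgeo : GeodesicMetricSpace X) (hhyp : RipsHyperbolic X δ)
    (w x z : X) {f h : ℝ → X}
    (hf : IsGeodesicSegment w x f) (hh : IsGeodesicSegment z w h)
    {t ε : ℝ} (ht0 : 0 ≤ t) (hε : 0 < ε) (ht : t + δ + ε ≤ gromovProd x z w) :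
    dist (f t) (h (dist z w - t)) < 2 * (δ + ε) := by
  obtain ⟨g, hg⟩ := hgeo x z
  have hgpx : gromovProd x z w ≤ dist w x := gp_le_left x z w
  have hgpz : gromovProd x z w ≤ dist w z := gp_le_right x z w
  have htx : t ≤ dist w x := by linarith
  have htz : t ≤ dist w z := by linarith
  have htmem : t ∈ Set.Icc (0:ℝ) (dist w x) := ⟨ht0, htx⟩
  have hinf := hhyp w x z f g h hf hg hh t htmem
  have hne : (g '' Set.Icc 0 (dist x z) ∪ h '' Set.Icc 0 (dist z w)).Nonempty := by
    refine ⟨h 0, Or.inr ⟨0, ⟨le_refl 0, dist_nonneg⟩, rfl⟩⟩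
  have hlt : infDist (f t) (g '' Set.Icc 0 (dist x z) ∪ h '' Set.Icc 0 (dist z w)) < δ + ε :=
    lt_of_le_of_lt hinf (by linarith)
  rw [Metric.infDist_lt_iff hne] at hlt
  obtain ⟨q, hq, hdq⟩ := hlt
  -- basic distances for f
  have hwf : dist w (f t) = t := by
    have := hf.2.2 0 ⟨le_refl 0, dist_nonneg⟩ t htmem
    rw [hf.1] at this
    rw [this]
    rw [abs_of_nonpos (by linarith)]; ring
  have hfx : dist (f t) x = dist w x - t := by
    have := hf.2.2 t htmem (dist w x) ⟨dist_nonneg, le_refl _⟩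
    rw [hf.2.1] at this
    rw [this, abs_of_nonpos (by linarith)]; ring
  rcases hq with hq | hq
  · -- q on the side x -- z : contradiction
    exfalso
    obtain ⟨u, hu, rfl⟩ := hq
    have hxq : dist x (g u) = u := by
      have := hg.2.2 0 ⟨le_refl 0, dist_nonneg⟩ u hu
      rw [hg.1] at this
      rw [this, abs_of_nonpos (by linarith [hu.1])]; ring
    have hqz : dist (g u) z = dist x z - u := by
      have := hg.2.2 u hu (dist x z) ⟨dist_nonneg, le_refl _⟩
      rw [hg.2.1] at this
      rw [this, abs_of_nonpos (by linarith [hu.2])]; ring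
    have h1 : dist w x - t - (δ + ε) < u := by
      have h2 := dist_triangle x (g u) (f t)
      rw [hxq, dist_comm x (f t), hfx, dist_comm (g u) (f t)] at h2
      linarith
    have h2 : dist w z - dist x z + u ≤ dist w (g u) := by
      have h3 := dist_triangle w (g u) z
      rw [hqz] at h3
      linarith
    have h3 : dist w (g u) ≤ t + (δ + ε) := by
      have := dist_triangle w (f t) (g u)
      rw [hwf] at this
      linarith
    have hgp : 2 * gromovProd x z w = dist w x + dist w z - dist x z := by
      unfold gromovProd; ring
    linarith
  · obtain ⟨u, hu, rfl⟩ := hq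
    have hwq : dist w (h u) = dist z w - u := by
      have := hh.2.2 u hu (dist z w) ⟨dist_nonneg, le_refl _⟩
      rw [hh.2.1] at this
      rw [dist_comm, this, abs_of_nonpos (by linarith [hu.2])]; ring
    have hmem2 : dist z w - t ∈ Set.Icc (0:ℝ) (dist z w) := by
      constructor
      · rw [dist_comm] at htz ⊢; linarith
      · linarith
    have hqp : dist (h u) (h (dist z w - t)) = |u - (dist z w - t)| := hh.2.2 u hu _ hmem2
    have habs : |dist w (h u) - t| ≤ dist (f t) (h u) := by
      have h6 := abs_dist_sub_le (h u) (f t) w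
      rw [dist_comm (h u) w, dist_comm (f t) w, hwf, dist_comm (h u) (f t)] at h6
      exact h6
    rw [hwq] at habs
    rw [show dist z w - u - t = -(u - (dist z w - t)) by ring, abs_neg] at habs
    have : |u - (dist z w - t)| < δ + ε := by linarith
    calc dist (f t) (h (dist z w - t)) ≤ dist (f t) (h u) + dist (h u) (h (dist z w - t)) :=
          dist_triangle _ _ _
      _ < (δ + ε) + (δ + ε) := by rw [hqp]; exact add_lt_add hdq this
      _ = 2 * (δ + ε) := by ring

end Hyp

section Hyp2
variable {X : Type*} [MetricSpace X]

lemma gromov_4pt {δ : ℝ} (hδ : 0 ≤ δ) (hgeo : GeodesicMetricSpace X) (hhyp : RipsHyperbolic X δ)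
    (w x y z : X) :
    min (gromovProd x z w) (gromovProd z y w) - 3 * δ ≤ gromovProd x y w := by
  have key : ∀ ε > (0:ℝ),
      min (gromovProd x z w) (gromovProd z y w) - 3 * δ ≤ gromovProd x y w + 3 * ε := by
    intro ε hε
    set m := min (gromovProd x z w) (gromovProd z y w) with hm
    by_cases hcase : m ≤ δ + ε
    · have := gp_nonneg x y w
      linarith
    · push_neg at hcase
      set t := m - δ - ε with htdef
      have ht0 : 0 ≤ t := by simp only [htdef]; linarith
      have hmx : m ≤ gromovProd x z w := min_le_left _ _
      have hmy : m ≤ gromovProd z y w := min_le_right _ _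
      obtain ⟨f₁, hf₁⟩ := hgeo w x
      obtain ⟨f₂, hf₂⟩ := hgeo w y
      obtain ⟨h, hh⟩ := hgeo z w
      have hA1 : dist (f₁ t) (h (dist z w - t)) < 2 * (δ + ε) := by
        refine lemmaA hδ hgeo hhyp w x z hf₁ hh ht0 hε ?_
      -- t + δ + ε = m ≤ gromovProd x z w
        simp only [htdef]; linarith
      have hA2 : dist (f₂ t) (h (dist z w - t)) < 2 * (δ + ε) := by
        refine lemmaA hδ hgeo hhyp w y z hf₂ hh ht0 hε ?_
        rw [gp_comm]
        simp only [htdef]; linarith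
      have htx : t ≤ dist w x := by
        have := gp_le_left x z w; simp only [htdef]; linarith
      have hty : t ≤ dist w y := by
        have := gp_le_right z y w; simp only [htdef]; linarith
      have hfx : dist (f₁ t) x = dist w x - t := by
        have := hf₁.2.2 t ⟨ht0, htx⟩ (dist w x) ⟨dist_nonneg, le_refl _⟩
        rw [hf₁.2.1] at this
        rw [this, abs_of_nonpos (by linarith)]; ring
      have hfy : dist (f₂ t) y = dist w y - t := by
        have := hf₂.2.2 t ⟨ht0, hty⟩ (dist w y) ⟨dist_nonneg, le_refl _⟩
        rw [hf₂.2.1] at this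
        rw [this, abs_of_nonpos (by linarith)]; ring
      have hxy : dist x y ≤ (dist w x - t) + 4 * (δ + ε) + (dist w y - t) := by
        have e1 := dist_triangle x (f₁ t) y
        have e2 := dist_triangle (f₁ t) (f₂ t) y
        have e3 := dist_triangle (f₁ t) (h (dist z w - t)) (f₂ t)
        rw [dist_comm x (f₁ t)] at e1
        rw [hfx] at e1
        rw [hfy] at e2
        rw [dist_comm (h (dist z w - t)) (f₂ t)] at e3
        linarith
      have hgoal : (dist w x + dist w y - dist x y) / 2 ≥ t - 2 * (δ + ε) := by linarith
      unfold gromovProd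
      simp only [htdef] at hgoal
      linarith
  refine le_of_forall_pos_le_add fun ε hε => ?_
  have := key (ε / 3) (by linarith)
  linarith

end Hyp2

section Orbit
variable {X : Type*} [MetricSpace X]

lemma pow_apply_add (T : X ≃ᵢ X) (m n : ℕ) (x : X) :
    (T ^ (m + n)) x = (T ^ m) ((T ^ n) x) := by
  rw [pow_add]; rfl

lemma dist_orbit_subadd (T : X ≃ᵢ X) (x : X) (m n : ℕ) :
    dist ((T ^ (m + n)) x) x ≤ dist ((T ^ m) x) x + dist ((T ^ n) x) x := by
  calc dist ((T ^ (m + n)) x) x ≤ dist ((T ^ (m + n)) x) ((T ^ m) x) + dist ((T ^ m) x) x :=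
        dist_triangle _ _ _
    _ = dist ((T ^ n) x) x + dist ((T ^ m) x) x := by
        rw [pow_apply_add, (T ^ m).dist_eq]
    _ = _ := by ring

lemma fekete_le {u : ℕ → ℝ} (hu0 : u 0 = 0) (hsub : ∀ m n, u (m + n) ≤ u m + u n) {l : ℝ}
    (hlim : Tendsto (fun n : ℕ => u n / n) atTop (𝓝 l)) (m : ℕ) : (m : ℝ) * l ≤ u m := by
  rcases Nat.eq_zero_or_pos m with rfl | hm
  · simp [hu0]
  · have hkm : ∀ k : ℕ, u (k * m) ≤ (k : ℝ) * u m := by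
      intro k; induction k with
      | zero => simp [hu0]
      | succ k ih =>
          have h1 := hsub (k * m) m
          have h2 : (k + 1) * m = k * m + m := by ring
          rw [h2]
          push_cast
          linarith
    have hmul : Tendsto (fun k : ℕ => k * m) atTop atTop := by
      refine tendsto_atTop_atTop.mpr fun b => ⟨b, fun a ha => ?_⟩
      calc b ≤ a := ha
        _ ≤ a * m := Nat.le_mul_of_pos_right a hm
    have hcomp : Tendsto (fun k : ℕ => u (k * m) / ((k * m : ℕ) : ℝ)) atTop (𝓝 l) :=
      hlim.comp hmul
    have hle : l ≤ u m / m := by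
      refine le_of_tendsto hcomp ?_
      filter_upwards [eventually_ge_atTop 1] with k hk
      have hkpos : (0 : ℝ) < k := by exact_mod_cast hk
      have hmpos : (0 : ℝ) < m := by exact_mod_cast hm
      have hcast : ((k * m : ℕ) : ℝ) = (k : ℝ) * m := by push_cast; ring
      rw [hcast]
      have h2 : ((k : ℝ) * u m) / ((k : ℝ) * m) = u m / m := by
        rw [mul_div_mul_left _ _ (ne_of_gt hkpos)]
      calc u (k * m) / ((k : ℝ) * m) ≤ ((k : ℝ) * u m) / ((k : ℝ) * m) :=
            div_le_div_of_nonneg_right (hkm k) (by positivity) |>.trans_eq rfl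
        _ = u m / m := h2
    have hmpos : (0 : ℝ) < m := by exact_mod_cast hm
    have := mul_le_mul_of_nonneg_right hle (le_of_lt hmpos)
    rw [div_mul_cancel₀ _ (ne_of_gt hmpos)] at this
    linarith

end Orbit

section Bus
variable {X : Type*} [MetricSpace X]

noncomputable def busFun (T : X ≃ᵢ X) (x₀ : X) (l : ℝ) (z : X) (m : ℕ) : ℝ :=
  dist z ((T ^ m) x₀) - m * l

noncomputable def bus (T : X ≃ᵢ X) (x₀ : X) (l : ℝ) (z : X) : ℝ :=
  liminf (busFun T x₀ l z) atTop

variable {T : X ≃ᵢ X} {x₀ : X} {l C : ℝ}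

lemma busFun_lower (hlow : ∀ m : ℕ, (m : ℝ) * l ≤ dist ((T ^ m) x₀) x₀) (z : X) (m : ℕ) :
    -dist x₀ z ≤ busFun T x₀ l z m := by
  have h1 := dist_triangle ((T ^ m) x₀) z x₀
  have h2 := hlow m
  unfold busFun
  rw [dist_comm ((T ^ m) x₀) z, dist_comm z x₀] at h1
  linarith

lemma busFun_upper (hupp : ∀ m : ℕ, dist ((T ^ m) x₀) x₀ ≤ (m : ℝ) * l + C) (z : X) (m : ℕ) :
    busFun T x₀ l z m ≤ dist x₀ z + C := by
  have h1 := dist_triangle z x₀ ((T ^ m) x₀)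
  have h2 := hupp m
  unfold busFun
  rw [dist_comm x₀ ((T ^ m) x₀)] at h1
  rw [dist_comm z x₀] at h1
  linarith

lemma bus_bddBelow (hlow : ∀ m : ℕ, (m : ℝ) * l ≤ dist ((T ^ m) x₀) x₀) (z : X) :
    IsBoundedUnder (· ≥ ·) atTop (busFun T x₀ l z) :=
  isBoundedUnder_of ⟨-dist x₀ z, fun m => busFun_lower hlow z m⟩

lemma bus_cobdd (hupp : ∀ m : ℕ, dist ((T ^ m) x₀) x₀ ≤ (m : ℝ) * l + C) (z : X) :
    IsCoboundedUnder (· ≥ ·) atTop (busFun T x₀ l z) :=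
  IsBoundedUnder.isCoboundedUnder_ge
    (isBoundedUnder_of ⟨dist x₀ z + C, fun m => busFun_upper hupp z m⟩)

lemma le_bus (hlow : ∀ m : ℕ, (m : ℝ) * l ≤ dist ((T ^ m) x₀) x₀)
    (hupp : ∀ m : ℕ, dist ((T ^ m) x₀) x₀ ≤ (m : ℝ) * l + C) (z : X) :
    -dist x₀ z ≤ bus T x₀ l z :=
  le_liminf_of_le (bus_cobdd hupp z) (Eventually.of_forall (busFun_lower hlow z))

lemma bus_le (hlow : ∀ m : ℕ, (m : ℝ) * l ≤ dist ((T ^ m) x₀) x₀)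
    (hupp : ∀ m : ℕ, dist ((T ^ m) x₀) x₀ ≤ (m : ℝ) * l + C) (z : X) :
    bus T x₀ l z ≤ dist x₀ z + C :=
  liminf_le_of_frequently_le
    ((Eventually.of_forall (busFun_upper hupp z)).frequently) (bus_bddBelow hlow z)

lemma bus_map (hlow : ∀ m : ℕ, (m : ℝ) * l ≤ dist ((T ^ m) x₀) x₀)
    (hupp : ∀ m : ℕ, dist ((T ^ m) x₀) x₀ ≤ (m : ℝ) * l + C) (z : X) :
    bus T x₀ l (T z) = bus T x₀ l z - l := by
  have key : ∀ m : ℕ, busFun T x₀ l (T z) (m + 1) = busFun T x₀ l z m + -l := by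
    intro m
    unfold busFun
    have h1 : (T ^ (m + 1)) x₀ = T ((T ^ m) x₀) := by
      rw [Nat.add_comm]; exact pow_apply_add T 1 m x₀ |>.trans (by rw [pow_one])
    have h2 : dist (T z) ((T ^ (m + 1)) x₀) = dist z ((T ^ m) x₀) := by
      rw [h1, T.dist_eq]
    rw [h2]
    push_cast; ring
  have h3 : bus T x₀ l (T z) = liminf (fun m => busFun T x₀ l (T z) (m + 1)) atTop :=
    (liminf_nat_add (busFun T x₀ l (T z)) 1).symm
  rw [bus, ← liminf_nat_add (busFun T x₀ l (T z)) 1]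
  have h4 : (fun m => busFun T x₀ l (T z) (m + 1)) = fun m => busFun T x₀ l z m + -l := by
    funext m; exact key m
  rw [h4, liminf_add_const atTop (busFun T x₀ l z) (-l) (bus_cobdd hupp z) (bus_bddBelow hlow z)]
  rw [bus]; ring

lemma bus_inv_map (hlow : ∀ m : ℕ, (m : ℝ) * l ≤ dist ((T ^ m) x₀) x₀)
    (hupp : ∀ m : ℕ, dist ((T ^ m) x₀) x₀ ≤ (m : ℝ) * l + C) (z : X) :
    bus T x₀ l (T⁻¹ z) = bus T x₀ l z + l := by
  have key : ∀ m : ℕ, busFun T x₀ l (T⁻¹ z) m = busFun T x₀ l z (m + 1) + l := by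
    intro m
    unfold busFun
    have h1 : (T ^ (m + 1)) x₀ = T ((T ^ m) x₀) := by
      rw [Nat.add_comm]; exact pow_apply_add T 1 m x₀ |>.trans (by rw [pow_one])
    have h2 : dist (T⁻¹ z) ((T ^ m) x₀) = dist z ((T ^ (m + 1)) x₀) := by
      rw [h1, ← T.dist_eq (T⁻¹ z) ((T ^ m) x₀), T.apply_inv_self]
    rw [h2]
    push_cast; ring
  have h4 : busFun T x₀ l (T⁻¹ z) = fun m => busFun T x₀ l z (m + 1) + l := by
    funext m; exact key m
  rw [bus, h4]
  have hcob : IsCoboundedUnder (· ≥ ·) atTop (fun m => busFun T x₀ l z (m + 1)) :=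
    IsBoundedUnder.isCoboundedUnder_ge
      (isBoundedUnder_of ⟨dist x₀ z + C, fun m => busFun_upper hupp z (m + 1)⟩)
  have hbdd : IsBoundedUnder (· ≥ ·) atTop (fun m => busFun T x₀ l z (m + 1)) :=
    isBoundedUnder_of ⟨-dist x₀ z, fun m => busFun_lower hlow z (m + 1)⟩
  rw [liminf_add_const atTop (fun m => busFun T x₀ l z (m + 1)) l hcob hbdd]
  rw [liminf_nat_add (busFun T x₀ l z) 1, bus]

end Bus

section Upper
variable {X : Type*} [MetricSpace X]

lemma gp_dist_eq (x y z : X) : dist x y = dist z x + dist z y - 2 * gromovProd x y z := by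
  unfold gromovProd; ring

lemma gp_self (x y : X) : gromovProd x y x = 0 := by
  unfold gromovProd; simp

lemma dist_pow_le_linear (T : X ≃ᵢ X) (z : X) (m : ℕ) :
    dist ((T ^ m) z) z ≤ (m : ℝ) * dist (T z) z := by
  induction m with
  | zero => simp
  | succ m ih =>
      have h1 : (T ^ (m + 1)) z = (T ^ m) (T z) := by
        exact pow_apply_add T m 1 z |>.trans (by rw [pow_one])
      have h2 : dist ((T ^ (m + 1)) z) ((T ^ m) z) = dist (T z) z := by
        rw [h1, (T ^ m).dist_eq]
      have h3 := dist_triangle ((T ^ (m + 1)) z) ((T ^ m) z) z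
      rw [h2] at h3
      push_cast
      linarith

lemma tendsto_base_change (T : X ≃ᵢ X) (x₀ z₀ : X) {l : ℝ}
    (h : Tendsto (fun n : ℕ => dist ((T ^ n) x₀) x₀ / n) atTop (𝓝 l)) :
    Tendsto (fun n : ℕ => dist ((T ^ n) z₀) z₀ / n) atTop (𝓝 l) := by
  have hb : ∀ n : ℕ, dist ((T ^ n) z₀) z₀ ≤ dist ((T ^ n) x₀) x₀ + 2 * dist x₀ z₀ ∧
      dist ((T ^ n) x₀) x₀ - 2 * dist x₀ z₀ ≤ dist ((T ^ n) z₀) z₀ := by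
    intro n
    have h1 := dist_triangle4 ((T ^ n) z₀) ((T ^ n) x₀) x₀ z₀
    have h2 := dist_triangle4 ((T ^ n) x₀) ((T ^ n) z₀) z₀ x₀
    rw [(T ^ n).dist_eq, dist_comm z₀ x₀] at h1
    rw [(T ^ n).dist_eq, dist_comm z₀ x₀] at h2
    exact ⟨by linarith, by linarith⟩
  have hzero : Tendsto (fun n : ℕ => (2 * dist x₀ z₀) / n) atTop (𝓝 0) :=
    tendsto_const_div_atTop_nhds_zero_nat _
  have hup : Tendsto (fun n : ℕ => (dist ((T ^ n) x₀) x₀ + 2 * dist x₀ z₀) / n) atTop (𝓝 l) := by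
    have := h.add hzero
    rw [add_zero] at this
    refine this.congr fun n => ?_
    rw [← add_div]
  have hlo : Tendsto (fun n : ℕ => (dist ((T ^ n) x₀) x₀ - 2 * dist x₀ z₀) / n) atTop (𝓝 l) := by
    have := h.sub hzero
    rw [sub_zero] at this
    refine this.congr fun n => ?_
    rw [div_sub_div_same]
  refine tendsto_of_tendsto_of_tendsto_of_le_of_le' hlo hup ?_ ?_
  · filter_upwards [eventually_ge_atTop 1] with n hn
    have hnpos : (0 : ℝ) < n := by exact_mod_cast hn
    exact div_le_div_of_nonneg_right (hb n).2 hnpos.le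
  · filter_upwards [eventually_ge_atTop 1] with n hn
    have hnpos : (0 : ℝ) < n := by exact_mod_cast hn
    exact div_le_div_of_nonneg_right (hb n).1 hnpos.le

end Upper

section Main
variable {X : Type*} [MetricSpace X]

/-- Small Gromov product of forward and backward orbit points, seen from the axis. -/
lemma gp_pow_inv_pow_small {δ : ℝ} (hδ : 0 ≤ δ) (hgeo : GeodesicMetricSpace X)
    (hhyp : RipsHyperbolic X δ) (T : X ≃ᵢ X) {L : ℝ → X} (hL : IsGeodesicFromTo T L) :
    ∃ N₁ : ℕ, ∀ p : ℕ, N₁ ≤ p →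
      gromovProd ((T ^ p) (L 0)) ((T⁻¹ ^ p) (L 0)) (L 0) ≤ 6 * δ := by
  obtain ⟨Np, hNp⟩ := hL.2.1 (6 * δ + 1)
  obtain ⟨Nm, hNm⟩ := hL.2.2 (6 * δ + 1)
  refine ⟨⌈max Np Nm⌉₊, fun p hp => ?_⟩
  set z₀ := L 0 with hz₀
  set t : ℝ := max (max Np Nm) 0 with htdef
  have ht0 : 0 ≤ t := le_max_right _ _
  have hpN : max Np Nm ≤ (p : ℝ) := by
    have := (Nat.ceil_le).mp hp
    exact this
  by_contra hcon
  push_neg at hcon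
  have hP1 : 6 * δ + 1 ≤ gromovProd ((T ^ p) z₀) (L t) z₀ :=
    hNp p t (le_trans (le_max_left _ _) hpN)
      (le_trans (le_max_left _ _) (le_max_left _ _))
  have hP3 : 6 * δ + 1 ≤ gromovProd ((T⁻¹ ^ p) z₀) (L (-t)) z₀ :=
    hNm p t (le_trans (le_max_right _ _) hpN)
      (le_trans (le_max_right _ _) (le_max_left _ _))
  have hP0 : gromovProd (L t) (L (-t)) z₀ = 0 := by
    unfold gromovProd
    rw [hz₀, hL.1 0 t, hL.1 0 (-t), hL.1 t (-t)]
    rw [zero_sub, abs_neg, abs_of_nonneg ht0, zero_sub, neg_neg, abs_of_nonneg ht0,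
      sub_neg_eq_add, abs_of_nonneg (by linarith)]
    ring
  have h4a := gromov_4pt hδ hgeo hhyp z₀ ((T ^ p) z₀) (L (-t)) ((T⁻¹ ^ p) z₀)
  have h4b := gromov_4pt hδ hgeo hhyp z₀ (L t) (L (-t)) ((T ^ p) z₀)
  rw [hP0] at h4b
  have e1 : 3 * δ < gromovProd ((T ^ p) z₀) (L (-t)) z₀ := by
    have hmin : 6 * δ < min (gromovProd ((T ^ p) z₀) ((T⁻¹ ^ p) z₀) z₀)
        (gromovProd ((T⁻¹ ^ p) z₀) (L (-t)) z₀) :=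
      lt_min hcon (by linarith)
    linarith
  have e2 : 3 * δ < min (gromovProd (L t) ((T ^ p) z₀) z₀)
      (gromovProd ((T ^ p) z₀) (L (-t)) z₀) := by
    refine lt_min ?_ e1
    rw [gp_comm]
    linarith
  linarith

lemma dist_pow_upper {δ : ℝ} (hδ : 0 ≤ δ) (hgeo : GeodesicMetricSpace X)
    (hhyp : RipsHyperbolic X δ) (T : X ≃ᵢ X) {L : ℝ → X} (hL : IsGeodesicFromTo T L)
    {l : ℝ} (hl : 0 < l) (x₀ : X)
    (hlim : Tendsto (fun n : ℕ => dist ((T ^ n) x₀) x₀ / n) atTop (𝓝 l)) :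
    ∃ C : ℝ, 0 ≤ C ∧ ∀ m : ℕ, dist ((T ^ m) x₀) x₀ ≤ (m : ℝ) * l + C := by
  set z₀ := L 0 with hz₀
  have hlim' := tendsto_base_change T x₀ z₀ hlim
  have hlow : ∀ m : ℕ, (m : ℝ) * l ≤ dist ((T ^ m) z₀) z₀ :=
    fekete_le (by simp) (dist_orbit_subadd T z₀) hlim'
  obtain ⟨N₁, hS⟩ := gp_pow_inv_pow_small hδ hgeo hhyp T hL
  set p₀ : ℕ := max (max N₁ ⌈(18 * δ + 1) / l⌉₊) 1 with hp₀def
  have hgood : ∀ p : ℕ, p₀ ≤ p → dist ((T ^ p) z₀) z₀ ≤ (p : ℝ) * l + 18 * δ := by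
    intro p hp
    have hpN₁ : N₁ ≤ p := le_trans (le_trans (le_max_left _ _) (le_max_left _ _)) hp
    have hp1 : 1 ≤ p := le_trans (le_max_right _ _) hp
    have hSp := hS p hpN₁
    set D := dist ((T ^ p) z₀) z₀ with hD
    have hDl : (p : ℝ) * l ≤ D := hlow p
    have hD18 : 18 * δ + 1 ≤ D := by
      have h1 : ((18 * δ + 1) / l) ≤ (⌈(18 * δ + 1) / l⌉₊ : ℝ) := Nat.le_ceil _
      have h2 : (⌈(18 * δ + 1) / l⌉₊ : ℕ) ≤ p :=
        le_trans (le_trans (le_max_right _ _) (le_max_left _ _)) hp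
      have h3 : ((18 * δ + 1) / l) ≤ (p : ℝ) := le_trans h1 (by exact_mod_cast h2)
      have h4 := (div_le_iff₀ hl).mp h3
      linarith
    -- the auxiliary points y_k = T^(k*p) z₀
    have htrans : ∀ a b : ℕ, (T ^ (a + b)) z₀ = (T ^ a) ((T ^ b) z₀) := fun a b =>
      pow_apply_add T a b z₀
    have hDk : ∀ n : ℕ, dist ((T ^ (n * p)) z₀) ((T ^ ((n + 1) * p)) z₀) = D := by
      intro n
      have h5 : (n + 1) * p = n * p + p := by ring
      rw [h5, htrans (n * p) p, (T ^ (n * p)).dist_eq, dist_comm]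
    have hQ : ∀ n : ℕ, gromovProd z₀ ((T ^ ((n + 1) * p)) z₀) ((T ^ (n * p)) z₀) ≤ 9 * δ := by
      intro n
      induction n with
      | zero =>
          simp only [Nat.zero_mul, pow_zero]
          have : ((1 : X ≃ᵢ X)) z₀ = z₀ := rfl
          rw [this, gp_self]
          linarith
      | succ n ih =>
          by_contra hcon
          push_neg at hcon
          -- translation identities
          have hyn : (T ^ ((n + 1) * p)) (((T ^ p)⁻¹) z₀) = (T ^ (n * p)) z₀ := by
            have h5 : (n + 1) * p = n * p + p := by ring
            rw [h5, pow_apply_add T (n * p) p (((T ^ p)⁻¹) z₀)]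
            congr 1
            exact (T ^ p).apply_inv_self z₀
          have hyn2 : (T ^ ((n + 1) * p)) ((T ^ p) z₀) = (T ^ ((n + 2) * p)) z₀ := by
            have h5 : (n + 2) * p = (n + 1) * p + p := by ring
            rw [h5, htrans ((n + 1) * p) p]
          have hS' : gromovProd ((T ^ (n * p)) z₀) ((T ^ ((n + 2) * p)) z₀)
              ((T ^ ((n + 1) * p)) z₀) ≤ 6 * δ := by
            have := gp_isom (T ^ ((n + 1) * p)) (((T ^ p)⁻¹) z₀) ((T ^ p) z₀) z₀
            rw [hyn, hyn2] at this
            rw [this]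
            rw [gp_comm]
            have hinv : ((T ^ p)⁻¹ : X ≃ᵢ X) z₀ = (T⁻¹ ^ p) z₀ := by rw [inv_pow]
            rw [hinv]
            exact hSp
          have hb : gromovProd ((T ^ (n * p)) z₀) z₀ ((T ^ ((n + 1) * p)) z₀) ≥ D - 9 * δ := by
            have hsum := gp_sum z₀ ((T ^ (n * p)) z₀) ((T ^ ((n + 1) * p)) z₀)
            -- gp z₀ y_n y_{n+1} + gp z₀ y_{n+1} y_n = dist y_n y_{n+1}
            have hd := hDk n
            rw [gp_comm]
            linarith
          have h4 := gromov_4pt hδ hgeo hhyp ((T ^ ((n + 1) * p)) z₀) ((T ^ (n * p)) z₀)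
            ((T ^ ((n + 2) * p)) z₀) z₀
          have hmin : 9 * δ < min (gromovProd ((T ^ (n * p)) z₀) z₀ ((T ^ ((n + 1) * p)) z₀))
              (gromovProd z₀ ((T ^ ((n + 2) * p)) z₀) ((T ^ ((n + 1) * p)) z₀)) := by
            refine lt_min (by linarith) ?_
            have h5 : (n + 1) + 1 = n + 2 := by ring
            rw [h5] at hcon
            exact hcon
          rw [show n + 1 + 1 = n + 2 by ring] at h4
          linarith
    have hdist : ∀ n : ℕ, (n : ℝ) * (D - 18 * δ) ≤ dist ((T ^ (n * p)) z₀) z₀ := by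
      intro n
      induction n with
      | zero => simp
      | succ n ih =>
          have hid := gp_dist_eq z₀ ((T ^ ((n + 1) * p)) z₀) ((T ^ (n * p)) z₀)
          have hQn := hQ n
          have hd := hDk n
          have c1 : dist z₀ ((T ^ ((n + 1) * p)) z₀) = dist ((T ^ ((n + 1) * p)) z₀) z₀ :=
            dist_comm _ _
          have c2 : dist ((T ^ (n * p)) z₀) z₀ = dist z₀ ((T ^ (n * p)) z₀) := dist_comm _ _
          push_cast
          linarith [hid, hQn, hd, ih, c1, c2, hD18]
    -- pass to the limit
    have hmul : Tendsto (fun n : ℕ => n * p) atTop atTop := by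
      refine tendsto_atTop_atTop.mpr fun b => ⟨b, fun a ha => ?_⟩
      calc b ≤ a := ha
        _ ≤ a * p := Nat.le_mul_of_pos_right a hp1
    have hcomp : Tendsto (fun n : ℕ => dist ((T ^ (n * p)) z₀) z₀ / ((n * p : ℕ) : ℝ))
        atTop (𝓝 l) := hlim'.comp hmul
    have hple : (D - 18 * δ) / p ≤ l := by
      refine ge_of_tendsto hcomp ?_
      filter_upwards [eventually_ge_atTop 1] with n hn
      have hnpos : (0 : ℝ) < n := by exact_mod_cast hn
      have hppos : (0 : ℝ) < p := by exact_mod_cast hp1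
      have hcast : ((n * p : ℕ) : ℝ) = (n : ℝ) * p := by push_cast; ring
      rw [hcast]
      rw [div_le_div_iff₀ hppos (by positivity)]
      have := hdist n
      nlinarith
    have hppos : (0 : ℝ) < p := by exact_mod_cast hp1
    have := (div_le_iff₀ hppos).mp hple
    linarith
  -- now all m
  have hTz : l ≤ dist (T z₀) z₀ := by
    have := hlow 1
    rw [pow_one] at this
    simpa using this
  set C' : ℝ := 18 * δ + (p₀ : ℝ) * (dist (T z₀) z₀ - l) with hC'
  have hC'0 : 0 ≤ C' := by
    have : (0:ℝ) ≤ (p₀ : ℝ) * (dist (T z₀) z₀ - l) := by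
      apply mul_nonneg (Nat.cast_nonneg _); linarith
    linarith
  have hall : ∀ m : ℕ, dist ((T ^ m) z₀) z₀ ≤ (m : ℝ) * l + C' := by
    intro m
    rcases le_or_gt p₀ m with hm | hm
    · have := hgood m hm
      have h0 : (0:ℝ) ≤ (p₀ : ℝ) * (dist (T z₀) z₀ - l) := by
        apply mul_nonneg (Nat.cast_nonneg _); linarith
      linarith
    · have h1 := dist_pow_le_linear T z₀ m
      have h2 : (m : ℝ) * dist (T z₀) z₀ = (m : ℝ) * l + (m : ℝ) * (dist (T z₀) z₀ - l) := by
        ring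
      have h3 : (m : ℝ) * (dist (T z₀) z₀ - l) ≤ (p₀ : ℝ) * (dist (T z₀) z₀ - l) := by
        apply mul_le_mul_of_nonneg_right _ (by linarith)
        exact_mod_cast hm.le
      linarith
  refine ⟨C' + 2 * dist x₀ z₀, by positivity, fun m => ?_⟩
  have h1 := dist_triangle4 ((T ^ m) x₀) ((T ^ m) z₀) z₀ x₀
  rw [(T ^ m).dist_eq, dist_comm z₀ x₀] at h1
  have := hall m
  linarith

end Main

section Osc
variable {X : Type*} [MetricSpace X]

lemma busA_sub_busB_osc {δ : ℝ} (hδ : 0 ≤ δ) (hgeo : GeodesicMetricSpace X)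
    (hhyp : RipsHyperbolic X δ) {A Bi : X ≃ᵢ X} {x₀ : X} {lA lB CA CB : ℝ}
    (hlowA : ∀ m : ℕ, (m : ℝ) * lA ≤ dist ((A ^ m) x₀) x₀)
    (huppA : ∀ m : ℕ, dist ((A ^ m) x₀) x₀ ≤ (m : ℝ) * lA + CA)
    (hlowB : ∀ m : ℕ, (m : ℝ) * lB ≤ dist ((Bi ^ m) x₀) x₀)
    (huppB : ∀ m : ℕ, dist ((Bi ^ m) x₀) x₀ ≤ (m : ℝ) * lB + CB)
    (hsh : ∀ M : ℝ, ∃ N : ℝ, ∀ n m : ℕ, N ≤ (n : ℝ) → N ≤ (m : ℝ) →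
      M ≤ gromovProd ((A ^ n) x₀) ((Bi ^ m) x₀) x₀)
    (z z' : X) :
    bus A x₀ lA z - bus Bi x₀ lB z ≤ bus A x₀ lA z' - bus Bi x₀ lB z' + 6 * δ := by
  obtain ⟨N, hN⟩ := hsh (dist x₀ z + dist z z')
  set N₀ : ℕ := ⌈N⌉₊ with hN₀
  have hcast : ∀ n : ℕ, N₀ ≤ n → N ≤ (n : ℝ) := fun n hn => (Nat.ceil_le).mp hn
  -- Step 1: the comparison of distance differences
  have step1 : ∀ m k : ℕ, N₀ ≤ m → N₀ ≤ k →
      dist z ((A ^ m) x₀) - dist z' ((A ^ m) x₀) ≤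
        dist z ((Bi ^ k) x₀) - dist z' ((Bi ^ k) x₀) + 6 * δ := by
    intro m k hm hk
    have hR := hN m k (hcast m hm) (hcast k hk)
    have hba : gromovProd ((A ^ m) x₀) z' z - 3 * δ ≤ gromovProd ((Bi ^ k) x₀) z' z := by
      have h4 := gromov_4pt hδ hgeo hhyp z ((Bi ^ k) x₀) z' ((A ^ m) x₀)
      have hc : gromovProd ((A ^ m) x₀) z' z ≤ gromovProd ((Bi ^ k) x₀) ((A ^ m) x₀) z := by
        have hbc := gp_base_change ((A ^ m) x₀) ((Bi ^ k) x₀) z x₀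
        have hcm : gromovProd ((Bi ^ k) x₀) ((A ^ m) x₀) z =
            gromovProd ((A ^ m) x₀) ((Bi ^ k) x₀) z := gp_comm _ _ _
        have hle := gp_le_right ((A ^ m) x₀) z' z
        have hdzx : dist z x₀ = dist x₀ z := dist_comm _ _
        rw [hcm]
        linarith
      have hmin := le_min hc (le_refl (gromovProd ((A ^ m) x₀) z' z))
      linarith
    unfold gromovProd at hba
    have e1 : dist ((A ^ m) x₀) z' = dist z' ((A ^ m) x₀) := dist_comm _ _
    have e2 : dist ((Bi ^ k) x₀) z' = dist z' ((Bi ^ k) x₀) := dist_comm _ _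
    rw [e1, e2] at hba
    linarith
  -- Step 2: liminf over m
  have step2 : ∀ k : ℕ, N₀ ≤ k → bus A x₀ lA z ≤ bus A x₀ lA z' +
      (dist z ((Bi ^ k) x₀) - dist z' ((Bi ^ k) x₀) + 6 * δ) := by
    intro k hk
    set c := dist z ((Bi ^ k) x₀) - dist z' ((Bi ^ k) x₀) + 6 * δ with hcdef
    have hev : ∀ᶠ m in atTop, busFun A x₀ lA z m ≤ busFun A x₀ lA z' m + c := by
      filter_upwards [eventually_ge_atTop N₀] with m hm
      have := step1 m k hm hk
      unfold busFun
      simp only [hcdef]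
      linarith
    have h1 : liminf (fun m => busFun A x₀ lA z' m + c) atTop = bus A x₀ lA z' + c :=
      liminf_add_const atTop _ c (bus_cobdd huppA z') (bus_bddBelow hlowA z')
    have h2 : IsCoboundedUnder (· ≥ ·) atTop (fun m => busFun A x₀ lA z' m + c) :=
      IsBoundedUnder.isCoboundedUnder_ge (isBoundedUnder_of
        ⟨dist x₀ z' + CA + c, fun m => by
          have := busFun_upper huppA z' m; linarith⟩)
    have h3 := liminf_le_liminf hev (bus_bddBelow hlowA z) h2
    rw [h1] at h3
    exact h3
  -- Step 3: liminf over k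
  have hev2 : ∀ᶠ k in atTop, busFun Bi x₀ lB z' k ≤
      busFun Bi x₀ lB z k + (bus A x₀ lA z' - bus A x₀ lA z + 6 * δ) := by
    filter_upwards [eventually_ge_atTop N₀] with k hk
    have := step2 k hk
    unfold busFun
    linarith
  have h1 : liminf (fun k => busFun Bi x₀ lB z k +
      (bus A x₀ lA z' - bus A x₀ lA z + 6 * δ)) atTop =
      bus Bi x₀ lB z + (bus A x₀ lA z' - bus A x₀ lA z + 6 * δ) :=
    liminf_add_const atTop _ _ (bus_cobdd huppB z) (bus_bddBelow hlowB z)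
  have h2 : IsCoboundedUnder (· ≥ ·) atTop (fun k => busFun Bi x₀ lB z k +
      (bus A x₀ lA z' - bus A x₀ lA z + 6 * δ)) :=
    IsBoundedUnder.isCoboundedUnder_ge (isBoundedUnder_of
      ⟨dist x₀ z + CB + (bus A x₀ lA z' - bus A x₀ lA z + 6 * δ), fun k => by
        have := busFun_upper huppB z k; linarith⟩)
  have h3 := liminf_le_liminf hev2 (bus_bddBelow hlowB z') h2
  rw [h1] at h3
  have h4 : bus Bi x₀ lB z' ≤ bus Bi x₀ lB z +
      (bus A x₀ lA z' - bus A x₀ lA z + 6 * δ) := h3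
  linarith

end Osc


/-- If `A`, `B` and `AB` are hyperbolic isometries with `A⁺ = B⁻`, geodesic
lines between the fixed points exist, and `l_S(A) > l_S(B) + 88δ`, then `(AB)⁺ = A⁺`:
the Gromov products `((AB)ⁿx₀ | Aᵐx₀)_{x₀}` tend to `+∞` as `min(n,m) → +∞`. -/
theorem product_attracting_fixed_point
    {X : Type*} [MetricSpace X] (δ : ℝ) (hδ : 0 ≤ δ)
    (hgeo : GeodesicMetricSpace X) (hhyp : RipsHyperbolic X δ)
    (x₀ : X) (A B : X ≃ᵢ X) (lA lB lAB : ℝ)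
    (hlA : Tendsto (fun n : ℕ => dist ((A ^ n) x₀) x₀ / n) atTop (𝓝 lA)) (hlA0 : 0 < lA)
    (hlB : Tendsto (fun n : ℕ => dist ((B ^ n) x₀) x₀ / n) atTop (𝓝 lB)) (hlB0 : 0 < lB)
    (hlAB : Tendsto (fun n : ℕ => dist (((A * B) ^ n) x₀) x₀ / n) atTop (𝓝 lAB))
    (hlAB0 : 0 < lAB)
    (hshared : ∀ M : ℝ, ∃ N : ℝ, ∀ n m : ℕ, N ≤ (n : ℝ) → N ≤ (m : ℝ) →
      M ≤ gromovProd ((A ^ n) x₀) ((B⁻¹ ^ m) x₀) x₀)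
    (LA LB LAB : ℝ → X)
    (hLA : IsGeodesicFromTo A LA) (hLB : IsGeodesicFromTo B LB)
    (hLAB : IsGeodesicFromTo (A * B) LAB)
    (hbig : lA > lB + 88 * δ) :
    ∀ M : ℝ, ∃ N : ℝ, ∀ n m : ℕ, N ≤ (n : ℝ) → N ≤ (m : ℝ) →
      M ≤ gromovProd (((A * B) ^ n) x₀) ((A ^ m) x₀) x₀ := by
  intro M
  have hlowA : ∀ m : ℕ, (m : ℝ) * lA ≤ dist ((A ^ m) x₀) x₀ :=
    fekete_le (by simp) (dist_orbit_subadd A x₀) hlA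
  obtain ⟨CA, hCA0, huppA⟩ := dist_pow_upper hδ hgeo hhyp A hLA hlA0 x₀ hlA
  have hBinv : ∀ m : ℕ, dist ((B⁻¹ ^ m) x₀) x₀ = dist ((B ^ m) x₀) x₀ := by
    intro m
    rw [inv_pow]
    rw [← (B ^ m).dist_eq (((B ^ m)⁻¹) x₀) x₀, (B ^ m).apply_inv_self, dist_comm]
  have hlowB : ∀ m : ℕ, (m : ℝ) * lB ≤ dist ((B⁻¹ ^ m) x₀) x₀ := by
    intro m; rw [hBinv m]; exact fekete_le (by simp) (dist_orbit_subadd B x₀) hlB m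
  obtain ⟨CB, hCB0, huppB0⟩ := dist_pow_upper hδ hgeo hhyp B hLB hlB0 x₀ hlB
  have huppB : ∀ m : ℕ, dist ((B⁻¹ ^ m) x₀) x₀ ≤ (m : ℝ) * lB + CB := by
    intro m; rw [hBinv m]; exact huppB0 m
  have hε₀pos : 0 < lA - lB - 6 * δ := by linarith
  -- one step of the recursion
  have hstep : ∀ w : X, bus A x₀ lA ((A * B) w) ≤ bus A x₀ lA w - (lA - lB - 6 * δ) := by
    intro w
    have h1 : (A * B) w = A (B w) := rfl
    have h2 : bus A x₀ lA (A (B w)) = bus A x₀ lA (B w) - lA := bus_map hlowA huppA (B w)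
    have h3 : bus B⁻¹ x₀ lB (B w) = bus B⁻¹ x₀ lB w + lB := by
      have := bus_inv_map hlowB huppB w
      rw [inv_inv] at this
      exact this
    have h4 := busA_sub_busB_osc hδ hgeo hhyp hlowA huppA hlowB huppB hshared (B w) w
    rw [h1, h2]
    rw [h3] at h4
    linarith
  have hβn : ∀ n : ℕ, bus A x₀ lA (((A * B) ^ n) x₀) ≤
      bus A x₀ lA x₀ - (n : ℝ) * (lA - lB - 6 * δ) := by
    intro n
    induction n with
    | zero => simp
    | succ n ih =>
        have h1 : ((A * B) ^ (n + 1)) x₀ = (A * B) (((A * B) ^ n) x₀) := by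
          rw [Nat.add_comm]
          exact pow_apply_add (A * B) 1 n x₀ |>.trans (by rw [pow_one])
        rw [h1]
        have := hstep (((A * B) ^ n) x₀)
        push_cast
        linarith
  refine ⟨max ((2 * (M + 3 * δ) + bus A x₀ lA x₀ + 1) / (lA - lB - 6 * δ))
    ((M + 3 * δ + CA / 2) / lA), fun n m hn hm => ?_⟩
  -- pick a far index m' ≥ m realizing the liminf
  have hfreq := frequently_lt_of_liminf_lt (bus_cobdd huppA (((A * B) ^ n) x₀))
    (lt_add_one (bus A x₀ lA (((A * B) ^ n) x₀)))
  obtain ⟨m', hm'lt, hm'ge⟩ := (hfreq.and_eventually (eventually_ge_atTop m)).exists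
  have hβb := hβn n
  have hd1 : dist (((A * B) ^ n) x₀) ((A ^ m') x₀) - (m' : ℝ) * lA <
      bus A x₀ lA x₀ - (n : ℝ) * (lA - lB - 6 * δ) + 1 := by
    have h5 : busFun A x₀ lA (((A * B) ^ n) x₀) m' <
        bus A x₀ lA (((A * B) ^ n) x₀) + 1 := hm'lt
    unfold busFun at h5
    linarith
  have hd2 : (m' : ℝ) * lA ≤ dist x₀ ((A ^ m') x₀) := by
    rw [dist_comm]; exact hlowA m'
  have b1 : ((n : ℝ) * (lA - lB - 6 * δ) - bus A x₀ lA x₀ - 1) / 2 ≤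
      gromovProd (((A * B) ^ n) x₀) ((A ^ m') x₀) x₀ := by
    unfold gromovProd
    have h0 : (0 : ℝ) ≤ dist x₀ (((A * B) ^ n) x₀) := dist_nonneg
    linarith
  have hd3 : dist ((A ^ m') x₀) ((A ^ m) x₀) ≤ ((m' - m : ℕ) : ℝ) * lA + CA := by
    have heq : (A ^ m') x₀ = (A ^ m) ((A ^ (m' - m)) x₀) := by
      rw [← pow_apply_add A m (m' - m) x₀]
      congr 2
      omega
    rw [heq]
    calc dist ((A ^ m) ((A ^ (m' - m)) x₀)) ((A ^ m) x₀) = dist ((A ^ (m' - m)) x₀) x₀ :=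
          (A ^ m).dist_eq _ _
      _ ≤ _ := huppA _
  have hcast2 : ((m' - m : ℕ) : ℝ) = (m' : ℝ) - m := by
    rw [Nat.cast_sub hm'ge]
  have b2 : (m : ℝ) * lA - CA / 2 ≤ gromovProd ((A ^ m') x₀) ((A ^ m) x₀) x₀ := by
    unfold gromovProd
    have h1 : (m : ℝ) * lA ≤ dist x₀ ((A ^ m) x₀) := by
      rw [dist_comm]; exact hlowA m
    rw [hcast2] at hd3
    linarith
  have h4 := gromov_4pt hδ hgeo hhyp x₀ (((A * B) ^ n) x₀) ((A ^ m) x₀) ((A ^ m') x₀)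
  have hn' : M + 3 * δ ≤ ((n : ℝ) * (lA - lB - 6 * δ) - bus A x₀ lA x₀ - 1) / 2 := by
    have h5 : (2 * (M + 3 * δ) + bus A x₀ lA x₀ + 1) / (lA - lB - 6 * δ) ≤ (n : ℝ) :=
      le_trans (le_max_left _ _) hn
    have h6 := (div_le_iff₀ hε₀pos).mp h5
    linarith
  have hm'' : M + 3 * δ ≤ (m : ℝ) * lA - CA / 2 := by
    have h5 : (M + 3 * δ + CA / 2) / lA ≤ (m : ℝ) := le_trans (le_max_right _ _) hm
    have h6 := (div_le_iff₀ hlA0).mp h5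
    linarith
  have hminQ : M + 3 * δ ≤ min (gromovProd (((A * B) ^ n) x₀) ((A ^ m') x₀) x₀)
      (gromovProd ((A ^ m') x₀) ((A ^ m) x₀) x₀) :=
    le_min (le_trans hn' b1) (le_trans hm'' b2)
  linarith
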